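/- Let l be a nonnegative integer, r a negative integer, and let a, b, c be real numbers with c < r − l (or c a nonpositive integer with c ≤ r − l), such that a − l and b + 1 are not nonpositive integers. Then ₃F₂(a, b−r, c; a−l, b+1; 1) = 0. -/

import Mathlib

open Finset

/-- Pochhammer symbol `(a)ₙ = a(a+1)⋯(a+n-1)` for natural `n`. -/
noncomputable def poch (a : ℝ) (n : ℕ) : ℝ := Polynomial.eval a (ascPochhammer ℝ n)

/-- Pochhammer symbol `(a)ₖ` for integer `k`: for `k ≥ 0` the ascending product,
and `(a)₋ₖ = (-1)ᵏ/(1-a)ₖ` for `k ≥ 0`. -/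
noncomputable def pochZ (a : ℝ) (k : ℤ) : ℝ :=
  if 0 ≤ k then poch a k.toNat else (-1) ^ (-k).toNat / poch (1 - a) (-k).toNat

/-- The (generally non-terminating) Clausen series `₃F₂(a,b,c;d,e;1)`. -/
noncomputable def F32 (a b c d e : ℝ) : ℝ :=
  ∑' n : ℕ, poch a n * poch b n * poch c n / (poch d n * poch e n * n.factorial)

/-- A terminating `₃F₂(a,b,c;d,e;1)` summed over `k = 0, …, N`. -/
noncomputable def F32sum (N : ℕ) (a b c d e : ℝ) : ℝ :=
  ∑ k ∈ Finset.range (N + 1),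
    poch a k * poch b k * poch c k / (poch d k * poch e k * k.factorial)

/-- The Kummer confluent hypergeometric function `₁F₁(a;b;x)`. -/
noncomputable def F11 (a b x : ℝ) : ℝ :=
  ∑' n : ℕ, poch a n * x ^ n / (poch b n * n.factorial)

open Filter Topology Polynomial

lemma poch_zero (a : ℝ) : poch a 0 = 1 := by simp [poch]

lemma poch_succ (a : ℝ) (n : ℕ) : poch a (n + 1) = poch a n * (a + n) := by
  simp [poch, ascPochhammer_succ_right]

lemma poch_succ_left (a : ℝ) (n : ℕ) : poch a (n + 1) = a * poch (a + 1) n := by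
  simp [poch, ascPochhammer_succ_left, eval_comp]

lemma poch_add (a : ℝ) (n m : ℕ) : poch a (n + m) = poch a n * poch (a + n) m := by
  have := congrArg (Polynomial.eval a) (ascPochhammer_mul ℝ n m)
  simpa [poch, eval_comp] using this.symm

lemma poch_eq_prod (a : ℝ) (n : ℕ) : poch a n = ∏ i ∈ range n, (a + i) := by
  induction n with
  | zero => simp [poch_zero]
  | succ n ih => rw [poch_succ, ih, Finset.prod_range_succ]

lemma poch_ne_zero {a : ℝ} (h : ∀ k : ℕ, a ≠ -(k : ℝ)) (n : ℕ) : poch a n ≠ 0 := by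
  rw [poch_eq_prod]
  exact Finset.prod_ne_zero_iff.mpr fun i _ => by
    have := h i; intro hz; apply this; linarith

lemma poch_pos {a : ℝ} (h : 0 < a) (n : ℕ) : 0 < poch a n := ascPochhammer_pos n a h

lemma poch_sum (d : ℝ) (J : ℕ) :
    ∑ j ∈ range (J + 1), poch d j / j.factorial = poch (d + 1) J / J.factorial := by
  induction J with
  | zero => simp [poch_zero]
  | succ J ih =>
    rw [Finset.sum_range_succ, ih]
    have h1 : poch d (J + 1) = d * poch (d + 1) J := poch_succ_left d J
    have h2 : poch (d + 1) (J + 1) = poch (d + 1) J * (d + 1 + J) := poch_succ _ _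
    have hf : ((J + 1).factorial : ℝ) = (J + 1) * J.factorial := by
      rw [Nat.factorial_succ]; push_cast; ring
    have hJ : (J.factorial : ℝ) ≠ 0 := Nat.cast_ne_zero.mpr (Nat.factorial_ne_zero J)
    have hJ1 : ((J : ℝ) + 1) ≠ 0 := by positivity
    rw [h1, h2, hf]
    field_simp
    ring

lemma tendsto_poch_div_factorial {e : ℝ} (he : e < 1) :
    Tendsto (fun J : ℕ => poch e J / J.factorial) atTop (𝓝 0) := by
  by_cases hint : ∃ N : ℕ, e = -(N : ℝ)
  · obtain ⟨N, rfl⟩ := hint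
    apply Tendsto.congr' _ tendsto_const_nhds
    filter_upwards [eventually_ge_atTop (N + 1)] with J hJ
    rw [poch_eq_prod]
    rw [Finset.prod_eq_zero (Finset.mem_range.mpr (by omega : N < J)) (by ring)]
    simp
  · push_neg at hint
    have hG : Real.Gamma e ≠ 0 := Real.Gamma_ne_zero hint
    have hGS : ∀ n : ℕ, Real.GammaSeq e n = (n : ℝ) ^ e * n.factorial / poch e (n + 1) := by
      intro n
      rw [Real.GammaSeq, poch_eq_prod]
    have hne : ∀ n : ℕ, poch e (n + 1) ≠ 0 := by
      intro n
      rw [poch_eq_prod]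
      exact Finset.prod_ne_zero_iff.mpr fun i _ hz => hint i (by linarith)
    have key : ∀ n : ℕ, 1 ≤ n →
        poch e (n + 1) / (n + 1).factorial = (n : ℝ) ^ e / ((n : ℝ) + 1) / Real.GammaSeq e n := by
      intro n hn
      have hnpos : (0 : ℝ) < n := by exact_mod_cast hn
      have hrp : (0 : ℝ) < (n : ℝ) ^ e := Real.rpow_pos_of_pos hnpos e
      have hfac : ((n + 1).factorial : ℝ) = ((n : ℝ) + 1) * n.factorial := by
        rw [Nat.factorial_succ]; push_cast; ring
      rw [hGS, hfac]
      have h1 : (n.factorial : ℝ) ≠ 0 := Nat.cast_ne_zero.mpr (Nat.factorial_ne_zero n)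
      field_simp
    have h2 : Tendsto (fun n : ℕ => (n : ℝ) ^ e / ((n : ℝ) + 1) / Real.GammaSeq e n)
        atTop (𝓝 0) := by
      have ha : Tendsto (fun n : ℕ => (n : ℝ) ^ e / ((n : ℝ) + 1)) atTop (𝓝 0) := by
        have hup : Tendsto (fun n : ℕ => (n : ℝ) ^ (e - 1)) atTop (𝓝 0) := by
          have := tendsto_rpow_neg_atTop (by linarith : (0:ℝ) < 1 - e)
          rw [show -(1 - e) = e - 1 by ring] at this
          exact this.comp tendsto_natCast_atTop_atTop
        apply squeeze_zero_norm' _ hup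
        filter_upwards [eventually_ge_atTop 1] with n hn
        have hnpos : (0 : ℝ) < n := by exact_mod_cast hn
        have hrp : (0 : ℝ) ≤ (n : ℝ) ^ e := (Real.rpow_pos_of_pos hnpos e).le
        rw [Real.norm_eq_abs, abs_of_nonneg (by positivity)]
        rw [Real.rpow_sub hnpos, Real.rpow_one]
        apply div_le_div_of_nonneg_left hrp hnpos
        linarith
      have hb : Tendsto (fun n : ℕ => Real.GammaSeq e n) atTop (𝓝 (Real.Gamma e)) :=
        Real.GammaSeq_tendsto_Gamma e
      have := ha.div hb hG
      rw [zero_div] at this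
      exact this
    have h3 : Tendsto (fun n : ℕ => poch e (n + 1) / (n + 1).factorial) atTop (𝓝 0) := by
      apply Tendsto.congr' _ h2
      filter_upwards [eventually_ge_atTop 1] with n hn
      exact (key n hn).symm
    exact (tendsto_add_atTop_iff_nat 1).mp h3

lemma hasSum_poch_div_factorial {d : ℝ} (hd : d < 0) :
    HasSum (fun j : ℕ => poch d j / j.factorial) 0 := by
  set f : ℕ → ℝ := fun j => poch d j / j.factorial with hf
  have hT : Tendsto (fun J : ℕ => ∑ j ∈ range J, f j) atTop (𝓝 0) := by
    rw [← tendsto_add_atTop_iff_nat 1]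
    apply Tendsto.congr _ (tendsto_poch_div_factorial (by linarith : d + 1 < 1))
    intro J; exact (poch_sum d J).symm
  set j0 : ℕ := ⌈-d⌉₊ + 1 with hj0def
  have hj0 : 0 < d + j0 := by
    have := Nat.le_ceil (-d)
    have : -d ≤ (⌈-d⌉₊ : ℝ) := this
    push_cast [hj0def]
    linarith
  have htail_sum : ∀ I : ℕ, ∑ i ∈ range I, f (i + j0)
      = (∑ j ∈ range (I + j0), f j) - ∑ j ∈ range j0, f j := by
    intro I
    rw [add_comm I j0, Finset.sum_range_add]
    simp [add_comm]
  have htail_tendsto : Tendsto (fun I : ℕ => ∑ i ∈ range I, f (i + j0)) atTop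
      (𝓝 (0 - ∑ j ∈ range j0, f j)) := by
    apply Tendsto.congr (fun I => (htail_sum I).symm)
    exact Tendsto.sub_const ((tendsto_add_atTop_iff_nat j0).mpr hT) _
  have htail_eq : ∀ i : ℕ, f (i + j0) = poch d j0 * (poch (d + j0) i / (i + j0).factorial) := by
    intro i
    simp only [hf]
    rw [add_comm i j0, poch_add d j0 i]
    ring
  have hHS : HasSum (fun i : ℕ => f (i + j0)) (0 - ∑ j ∈ range j0, f j) := by
    by_cases hc0 : poch d j0 = 0
    · have hz : ∀ i, f (i + j0) = 0 := by intro i; rw [htail_eq, hc0, zero_mul]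
      have : Tendsto (fun I : ℕ => ∑ i ∈ range I, f (i + j0)) atTop (𝓝 0) := by
        apply Tendsto.congr _ tendsto_const_nhds
        intro I; simp [hz]
      have h0 : (0 : ℝ) - ∑ j ∈ range j0, f j = 0 := tendsto_nhds_unique htail_tendsto this
      rw [h0]
      exact hasSum_zero.congr_fun hz
    · set g : ℕ → ℝ := fun i => poch (d + j0) i / (i + j0).factorial with hg
      have hgnn : ∀ i, 0 ≤ g i := by
        intro i
        apply div_nonneg (poch_pos hj0 i).le (by positivity)
      have hgps : Tendsto (fun I : ℕ => ∑ i ∈ range I, g i) atTop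
          (𝓝 ((0 - ∑ j ∈ range j0, f j) / poch d j0)) := by
        have := htail_tendsto.div_const (poch d j0)
        apply Tendsto.congr _ this
        intro I
        rw [Finset.sum_div]
        refine Finset.sum_congr rfl fun i _ => ?_
        rw [htail_eq i]
        exact mul_div_cancel_left₀ _ hc0
      have hgs : HasSum g ((0 - ∑ j ∈ range j0, f j) / poch d j0) :=
        (hasSum_iff_tendsto_nat_of_nonneg hgnn _).mpr hgps
      have := hgs.mul_left (poch d j0)
      rw [mul_div_cancel₀ _ hc0] at this
      exact this.congr_fun fun i => (htail_eq i)
  exact (hasSum_nat_add_iff' (f := f) j0).mp hHS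

lemma hasSum_poch_descFactorial (c : ℝ) (k : ℕ) (h : c + k < 0) :
    HasSum (fun n : ℕ => poch c n * (n.descFactorial k : ℝ) / n.factorial) 0 := by
  set f : ℕ → ℝ := fun n => poch c n * (n.descFactorial k : ℝ) / n.factorial with hf
  have hshift : ∀ j : ℕ, f (j + k) = poch c k * (poch (c + k) j / j.factorial) := by
    intro j
    have hd : (j.factorial : ℝ) * ((j + k).descFactorial k : ℝ) = ((j + k).factorial : ℝ) := by
      have h0 := Nat.factorial_mul_descFactorial (show k ≤ j + k by omega)
      rw [Nat.add_sub_cancel] at h0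
      exact_mod_cast h0
    have hpa : poch c (j + k) = poch c k * poch (c + k) j := by
      rw [add_comm j k, poch_add]
    have hj : (j.factorial : ℝ) ≠ 0 := Nat.cast_ne_zero.mpr (Nat.factorial_ne_zero j)
    have hjk : ((j + k).factorial : ℝ) ≠ 0 := Nat.cast_ne_zero.mpr (Nat.factorial_ne_zero _)
    simp only [hf]
    rw [hpa, ← hd]
    field_simp
  have h1 : HasSum (fun j : ℕ => f (j + k)) 0 := by
    have := (hasSum_poch_div_factorial h).mul_left (poch c k)
    rw [mul_zero] at this
    exact this.congr_fun fun j => hshift j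
  have h2 := (hasSum_nat_add_iff (f := f) k).mp h1
  have h3 : ∑ i ∈ range k, f i = 0 := by
    apply Finset.sum_eq_zero
    intro i hi
    simp only [hf]
    rw [Nat.descFactorial_eq_zero_iff_lt.mpr (Finset.mem_range.mp hi)]
    simp
  rwa [h3, zero_add] at h2

lemma hasSum_poch_poly (c : ℝ) (D : ℕ) (P : Polynomial ℝ) (hP : P.natDegree ≤ D)
    (h : c + D < 0) : HasSum (fun n : ℕ => poch c n * P.eval (n : ℝ) / n.factorial) 0 := by
  induction D generalizing P with
  | zero =>
    have hc : c < 0 := by simpa using h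
    obtain ⟨p0, rfl⟩ : ∃ p0, P = C p0 := ⟨P.coeff 0, (Polynomial.eq_C_of_natDegree_le_zero hP)⟩
    have := (hasSum_poch_div_factorial hc).mul_left p0
    rw [mul_zero] at this
    exact this.congr_fun fun n => by simp [mul_comm, mul_div_assoc]
  | succ D ih =>
    set q := P.coeff (D + 1) with hq
    set Q := P - C q * descPochhammer ℝ (D + 1) with hQ
    have hdeg : Q.natDegree ≤ D := by
      apply Polynomial.natDegree_le_iff_coeff_eq_zero.mpr
      intro N hN
      rcases eq_or_lt_of_le (Nat.succ_le_of_lt hN) with hN1 | hN1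
      · simp only [hQ, Polynomial.coeff_sub, Polynomial.coeff_C_mul, ← hN1]
        have : (descPochhammer ℝ (D + 1)).coeff (D + 1) = 1 := by
          have hm := monic_descPochhammer ℝ (D + 1)
          have := descPochhammer_natDegree ℝ (D + 1)
          rw [Polynomial.Monic, Polynomial.leadingCoeff, this] at hm
          exact hm
        rw [this, mul_one, sub_self]
      · simp only [hQ, Polynomial.coeff_sub, Polynomial.coeff_C_mul]
        rw [Polynomial.coeff_eq_zero_of_natDegree_lt (lt_of_le_of_lt hP hN1),
          Polynomial.coeff_eq_zero_of_natDegree_lt (by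
            rw [descPochhammer_natDegree]; exact hN1), mul_zero, sub_zero]
    have hcD : c + D < 0 := by push_cast at h ⊢; linarith
    have h1 := ih Q hdeg hcD
    have h2 := (hasSum_poch_descFactorial c (D + 1) (by push_cast at h ⊢; linarith)).mul_left q
    rw [mul_zero] at h2
    have h3 := h1.add h2
    rw [add_zero] at h3
    apply h3.congr_fun
    intro n
    have hev : Q.eval (n : ℝ) = P.eval (n : ℝ) - q * (n.descFactorial (D + 1) : ℝ) := by
      simp only [hQ, Polynomial.eval_sub, Polynomial.eval_mul, Polynomial.eval_C]
      rw [descPochhammer_eval_eq_descFactorial]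
    rw [hev]
    ring

theorem F32_vanishes_neg_r (l : ℕ) (r : ℤ) (hr : r < 0) (a b c : ℝ)
    (hc : c < (r : ℝ) - l ∨ ((∃ k : ℕ, c = -(k : ℝ)) ∧ c ≤ (r : ℝ) - l))
    (hal : ∀ k : ℕ, a - l ≠ -(k : ℝ))
    (hb1 : ∀ k : ℕ, b + 1 ≠ -(k : ℝ)) :
    F32 a (b - r) c (a - l) (b + 1) = 0 := by
  set m : ℕ := (-r).toNat with hm
  have hm1 : 1 ≤ m := by omega
  have hrZ : r = -(m : ℤ) := by omega
  have hrm : (r : ℝ) = -(m : ℝ) := by rw [hrZ]; push_cast; ring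
  have hcle : c ≤ (r : ℝ) - l := by
    rcases hc with h | h
    · linarith
    · exact h.2
  set P : Polynomial ℝ := ((ascPochhammer ℝ l).comp (X + C (a - l))) *
      ((ascPochhammer ℝ (m - 1)).comp (X + C (b + 1))) with hP
  have hPdeg : P.natDegree ≤ l + (m - 1) := by
    apply le_trans (Polynomial.natDegree_mul_le)
    have h1 : ((ascPochhammer ℝ l).comp (X + C (a - l))).natDegree = l := by
      rw [Polynomial.natDegree_comp, ascPochhammer_natDegree, natDegree_X_add_C, mul_one]
    have h2 : ((ascPochhammer ℝ (m - 1)).comp (X + C (b + 1))).natDegree = m - 1 := by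
      rw [Polynomial.natDegree_comp, ascPochhammer_natDegree, natDegree_X_add_C, mul_one]
    rw [h1, h2]
  have hm1cast : ((m - 1 : ℕ) : ℝ) = (m : ℝ) - 1 := by
    push_cast [Nat.cast_sub hm1]; ring
  have hCD : c + ((l + (m - 1) : ℕ) : ℝ) < 0 := by
    push_cast [hm1cast]
    rw [hrm] at hcle
    linarith
  have key := hasSum_poch_poly c (l + (m - 1)) P hPdeg hCD
  have hPeval : ∀ n : ℕ, P.eval (n : ℝ) = poch (a - l + n) l * poch (b + 1 + n) (m - 1) := by
    intro n
    simp only [hP, Polynomial.eval_mul, Polynomial.eval_comp, Polynomial.eval_add,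
      Polynomial.eval_X, Polynomial.eval_C, poch]
    rw [add_comm (n : ℝ) (a - l), add_comm (n : ℝ) (b + 1)]
  have hA : ∀ n : ℕ, poch (a - l) n ≠ 0 := poch_ne_zero hal
  have hB : ∀ n : ℕ, poch (b + 1) n ≠ 0 := poch_ne_zero hb1
  set K : ℝ := (poch (a - l) l * poch (b + 1) (m - 1))⁻¹ with hK
  have hKmul := key.mul_left K
  rw [mul_zero] at hKmul
  have hterm : ∀ n : ℕ,
      poch a n * poch (b - r) n * poch c n / (poch (a - l) n * poch (b + 1) n * n.factorial)
        = K * (poch c n * P.eval (n : ℝ) / n.factorial) := by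
    intro n
    have hbr : b - r = b + m := by rw [hrm]; ring
    have e1 : poch (a - l) l * poch a n = poch (a - l) n * poch (a - l + n) l := by
      have t1 := poch_add (a - l) l n
      have t2 := poch_add (a - l) n l
      rw [show a - l + l = a by push_cast; ring] at t1
      rw [add_comm n l, t1] at t2
      exact t2
    have e2 : poch (b + 1) (m - 1) * poch (b + m) n = poch (b + 1) n * poch (b + 1 + n) (m - 1) := by
      have t1 := poch_add (b + 1) (m - 1) n
      have t2 := poch_add (b + 1) n (m - 1)
      rw [show b + 1 + ((m - 1 : ℕ) : ℝ) = b + m by rw [hm1cast]; ring] at t1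
      rw [Nat.add_comm n (m - 1), t1] at t2
      exact t2
    have hfn : (n.factorial : ℝ) ≠ 0 := Nat.cast_ne_zero.mpr (Nat.factorial_ne_zero n)
    have main : poch a n * poch (b + m) n * poch c n * (poch (a - l) l * poch (b + 1) (m - 1))
        = poch c n * (poch (a - l + n) l * poch (b + 1 + n) (m - 1))
          * (poch (a - l) n * poch (b + 1) n) := by
      linear_combination (poch (b + m) n * poch c n * poch (b + 1) (m - 1)) * e1
        + (poch c n * poch (a - l) n * poch (a - l + n) l) * e2
    rw [hbr, hPeval n, hK]
    field_simp [hA n, hA l, hB n, hB (m - 1)]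
    linear_combination main
  have final : HasSum (fun n : ℕ =>
      poch a n * poch (b - r) n * poch c n /
        (poch (a - l) n * poch (b + 1) n * n.factorial)) 0 :=
    hKmul.congr_fun fun n => hterm n
  exact final.tsum_eq
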